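/- arXiv:2605.14149 — 2 statements merged into one kernel-verified Lean document; each statement's English description precedes it below -/
import Mathlib

section
/- Let U₁,…,Uₙ be i.i.d. real random variables with E[Uᵢ] = 0 and E[Uᵢ²] ≤ 1, and let |U|₂ = (∑ᵢ Uᵢ²)^{1/2}. Then E[((|U|₂ - √n)₊)²] ≤ 2·Var(U₁²) ≤ 2·E[U₁⁴], where x₊ = max(x,0). -/
set_option maxHeartbeats 1000000

open MeasureTheory ProbabilityTheory
open scoped ENNReal NNReal

theorem stmt1 {Ω : Type*} [MeasureSpace Ω] [IsProbabilityMeasure (ℙ : Measure Ω)]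
    {n : ℕ} (hn : 0 < n) (U : Fin n → Ω → ℝ)
    (hmeas : ∀ i, Measurable (U i))
    (hindep : iIndepFun U ℙ)
    (hident : ∀ i, Measure.map (U i) ℙ = Measure.map (U ⟨0, hn⟩) ℙ)
    (hmean : ∀ i, ∫ ω, U i ω = 0)
    (hvar : ∀ i, ∫ ω, (U i ω) ^ 2 ≤ 1)
    (hL4 : ∀ i, Integrable (fun ω => (U i ω) ^ 4)) :
    (∫ ω, max (Real.sqrt (∑ i, (U i ω) ^ 2) - Real.sqrt n) 0 ^ 2)
        ≤ 2 * variance (fun ω => (U ⟨0, hn⟩ ω) ^ 2) ℙ ∧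
      2 * variance (fun ω => (U ⟨0, hn⟩ ω) ^ 2) ℙ ≤ 2 * ∫ ω, (U ⟨0, hn⟩ ω) ^ 4 := by
  set i0 : Fin n := ⟨0, hn⟩
  set X : Fin n → Ω → ℝ := fun i ω => (U i ω) ^ 2 with hX
  set S : Ω → ℝ := fun ω => ∑ i, X i ω with hS
  -- L² membership of the X i
  have hX2 : ∀ i, MemLp (X i) 2 ℙ := by
    intro i
    refine (memLp_two_iff_integrable_sq
      (((hmeas i).pow_const 2).aestronglyMeasurable)).2 ?_
    simpa [← pow_mul] using hL4 i
  have hXint : ∀ i, Integrable (X i) := fun i => (hX2 i).integrable one_le_two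
  -- identical second moments
  have hm2 : ∀ i, ∫ ω, (U i ω) ^ 2 = ∫ ω, (U i0 ω) ^ 2 := by
    intro i
    have h1 : ∫ ω, (U i ω) ^ 2 = ∫ x, x ^ 2 ∂(Measure.map (U i) ℙ) :=
      (integral_map (hmeas i).aemeasurable
        (measurable_id.pow_const 2).aestronglyMeasurable).symm
    have h2 : ∫ ω, (U i0 ω) ^ 2 = ∫ x, x ^ 2 ∂(Measure.map (U i0) ℙ) :=
      (integral_map (hmeas i0).aemeasurable
        (measurable_id.pow_const 2).aestronglyMeasurable).symm
    rw [h1, h2, hident i]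
  have hm4 : ∀ i, ∫ ω, (U i ω) ^ 4 = ∫ ω, (U i0 ω) ^ 4 := by
    intro i
    have h1 : ∫ ω, (U i ω) ^ 4 = ∫ x, x ^ 4 ∂(Measure.map (U i) ℙ) :=
      (integral_map (hmeas i).aemeasurable
        (measurable_id.pow_const 4).aestronglyMeasurable).symm
    have h2 : ∫ ω, (U i0 ω) ^ 4 = ∫ x, x ^ 4 ∂(Measure.map (U i0) ℙ) :=
      (integral_map (hmeas i0).aemeasurable
        (measurable_id.pow_const 4).aestronglyMeasurable).symm
    rw [h1, h2, hident i]
  set m : ℝ := ∫ ω, (U i0 ω) ^ 2 with hmdef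
  set V : ℝ := variance (X i0) ℙ with hVdef
  have hVnonneg : 0 ≤ V := variance_nonneg _ _
  -- variance formula for each i
  have hvarf : ∀ i, variance (X i) ℙ = (∫ ω, (U i ω) ^ 4) - (∫ ω, (U i ω) ^ 2) ^ 2 := by
    intro i
    rw [variance_eq_sub (hX2 i)]
    congr 1
    · have : (X i) ^ 2 = fun ω => (U i ω) ^ 4 := by
        funext ω; simp [hX]; ring
      rw [this]
  have hvareq : ∀ i, variance (X i) ℙ = V := by
    intro i
    rw [hVdef, hvarf i, hvarf i0, hm2 i, hm4 i]
  -- variance of the sum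
  have hSmem : MemLp S 2 ℙ := by
    have h := memLp_finset_sum' (μ := (ℙ : Measure Ω)) Finset.univ
      (fun i _ => hX2 i)
    have e : S = ∑ i, X i := funext fun ω => (Finset.sum_apply _ _ _).symm
    rw [e]; exact h
  have hVarS : variance S ℙ = n * V := by
    have hpair : Set.Pairwise ↑(Finset.univ : Finset (Fin n))
        fun i j => IndepFun (X i) (X j) ℙ := by
      intro i _ j _ hij
      exact (hindep.indepFun hij).comp (measurable_id.pow_const 2)
        (measurable_id.pow_const 2)
    have h := IndepFun.variance_sum (μ := (ℙ : Measure Ω))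
      (fun i _ => hX2 i) hpair
    have hsum : (∑ i, X i) = S := by funext ω; simp [hS]
    rw [hsum] at h
    rw [h]
    simp [hvareq, Finset.sum_const, nsmul_eq_mul]
  -- mean of the sum
  have hES : ∫ ω, S ω = n * m := by
    rw [hS]
    rw [integral_finset_sum _ (fun i _ => hXint i)]
    have : ∀ i ∈ Finset.univ, ∫ ω, X i ω = m := fun i _ => hm2 i
    rw [Finset.sum_congr rfl this]
    simp [mul_comm]
  -- variance S as an integral
  have hVarSint : ∫ ω, (S ω - n * m) ^ 2 = variance S ℙ := by
    have h : variance S ℙ = ∫ ω, ((S - fun _ => ∫ ω, S ω) ^ (2:ℕ) : Ω → ℝ) ω :=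
      variance_eq_integral hSmem.aestronglyMeasurable.aemeasurable
    rw [h]
    have : ((S - fun _ => ∫ ω, S ω) ^ (2:ℕ)) = fun ω => (S ω - n * m) ^ 2 := by
      funext ω; simp [hES]
    rw [this]
  -- the dominating function is integrable
  have hdomInt : Integrable (fun ω => (S ω - n * m) ^ 2 / (4 * n)) := by
    have h1 : MemLp (fun ω => S ω - n * m) 2 ℙ := hSmem.sub (memLp_const _)
    have h2 : Integrable ((fun ω => S ω - n * m) ^ 2) :=
      (memLp_two_iff_integrable_sq h1.aestronglyMeasurable).1 h1
    have h3 : Integrable (fun ω => (S ω - n * m) ^ 2) := by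
      exact h2
    exact h3.div_const _
  -- basic facts
  have hm1 : m ≤ 1 := hvar i0
  have hn1 : (1:ℝ) ≤ n := by exact_mod_cast hn
  -- pointwise bound
  have hpt : ∀ ω, max (Real.sqrt (S ω) - Real.sqrt n) 0 ^ 2
      ≤ (S ω - n * m) ^ 2 / (4 * n) := by
    intro ω
    have hs0 : (0:ℝ) ≤ S ω := Finset.sum_nonneg fun i _ => sq_nonneg _
    have hn0 : (0:ℝ) ≤ n := by positivity
    have hsq : Real.sqrt (S ω) ^ 2 = S ω := Real.sq_sqrt hs0
    have hnq : Real.sqrt n ^ 2 = (n:ℝ) := Real.sq_sqrt hn0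
    have hs0' : 0 ≤ Real.sqrt (S ω) := Real.sqrt_nonneg _
    have hn0' : 0 ≤ Real.sqrt n := Real.sqrt_nonneg _
    rcases le_or_gt (S ω) n with h | h
    · have : Real.sqrt (S ω) - Real.sqrt n ≤ 0 := by
        have := Real.sqrt_le_sqrt h
        linarith
      rw [max_eq_right this]
      norm_num
      positivity
    · have hle : Real.sqrt n ≤ Real.sqrt (S ω) := Real.sqrt_le_sqrt h.le
      have hmax : max (Real.sqrt (S ω) - Real.sqrt n) 0
          = Real.sqrt (S ω) - Real.sqrt n := max_eq_left (by linarith)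
      rw [hmax, le_div_iff₀ (by positivity)]
      have hprod : (Real.sqrt (S ω) - Real.sqrt n) * (Real.sqrt (S ω) + Real.sqrt n)
          = S ω - n := by nlinarith
      have hnm : (n:ℝ) * m ≤ (n:ℝ) := by nlinarith
      have hd1 : (0:ℝ) ≤ S ω - n := by linarith
      have hd2 : S ω - n ≤ S ω - n * m := by linarith
      have e1 : (Real.sqrt (S ω) - Real.sqrt n) ^ 2 * (Real.sqrt (S ω) + Real.sqrt n) ^ 2
          = (S ω - n) ^ 2 := by rw [← mul_pow, hprod]
      have h4 : 4 * (n:ℝ) ≤ (Real.sqrt (S ω) + Real.sqrt n) ^ 2 := by nlinarith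
      have e2 : (Real.sqrt (S ω) - Real.sqrt n) ^ 2 * (4 * n)
          ≤ (Real.sqrt (S ω) - Real.sqrt n) ^ 2 * (Real.sqrt (S ω) + Real.sqrt n) ^ 2 :=
        mul_le_mul_of_nonneg_left h4 (sq_nonneg _)
      have e3 : (S ω - (n:ℝ)) ^ 2 ≤ (S ω - n * m) ^ 2 := by nlinarith
      linarith
  -- main chain
  constructor
  · calc (∫ ω, max (Real.sqrt (∑ i, (U i ω) ^ 2) - Real.sqrt n) 0 ^ 2)
        ≤ ∫ ω, (S ω - n * m) ^ 2 / (4 * n) := by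
          refine integral_mono_of_nonneg (ae_of_all _ fun ω => by positivity) hdomInt
            (ae_of_all _ fun ω => hpt ω)
    _ = (∫ ω, (S ω - n * m) ^ 2) / (4 * n) := integral_div _ _
    _ = (n * V) / (4 * n) := by rw [hVarSint, hVarS]
    _ = V / 4 := by
          field_simp
    _ ≤ 2 * V := by linarith
  · have h := hvarf i0
    have : V ≤ ∫ ω, (U i0 ω) ^ 4 := by
      rw [hVdef, h]
      nlinarith [sq_nonneg (∫ ω, (U i0 ω) ^ 2)]
    linarith
end

section
/- Fix p ≥ 2, t ∈ [0,1), K > 0, and set r = 2√(p(1-t)·log(4K^{-2}/(1-t))), assuming 4K^{-2}/(1-t) ≥ e and (K/2)^p ≤ 1/4. Define h: ℝ → [0,1] by h(x) = 1 for |x| ≤ r/2, h(x) = (r/2)^{-1}(r - |x|) for r/2 ≤ |x| ≤ r, and h(x) = 0 for |x| > r. Then ‖h'‖_{L^p(γ_{1-t})} ≤ K·‖h‖_{L^p(γ_{1-t})}, where γ_v is the centered Gaussian measure on ℝ with variance v. -/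
open MeasureTheory ProbabilityTheory Real
open scoped ENNReal NNReal

lemma pdf_mul_exp_eq {v : ℝ≥0} (hv : v ≠ 0) (s x : ℝ) :
    gaussianPDFReal 0 v x * Real.exp (s * x)
      = Real.exp (s ^ 2 * v / 2) * gaussianPDFReal (s * v) v x := by
  have hv' : (0:ℝ) < v := by positivity
  simp only [gaussianPDFReal, sub_zero]
  have key : -x ^ 2 / (2 * (v:ℝ)) + s * x = s ^ 2 * v / 2 + -(x - s * v) ^ 2 / (2 * v) := by
    field_simp
    ring
  rw [mul_assoc, ← Real.exp_add, key, Real.exp_add]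
  ring

lemma gauss_int {v : ℝ≥0} (hv : v ≠ 0) (g : ℝ → ℝ) :
    ∫ x, g x ∂(gaussianReal 0 v) = ∫ x, gaussianPDFReal 0 v x * g x := by
  rw [gaussianReal_of_var_ne_zero 0 hv]
  have h1 : gaussianPDF 0 v
      = fun x => ((Real.toNNReal (gaussianPDFReal 0 v x) : ℝ≥0) : ℝ≥0∞) := rfl
  rw [h1, integral_withDensity_eq_integral_smul
    ((measurable_gaussianPDFReal 0 v).real_toNNReal) g]
  congr 1
  ext x
  simp [NNReal.smul_def, Real.coe_toNNReal _ (gaussianPDFReal_nonneg 0 v x)]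

lemma pdf_mul_exp_integral {v : ℝ≥0} (hv : v ≠ 0) (s : ℝ) :
    ∫ x, gaussianPDFReal 0 v x * Real.exp (s * x) = Real.exp (s ^ 2 * v / 2) := by
  simp_rw [pdf_mul_exp_eq hv]
  rw [integral_const_mul, integral_gaussianPDFReal_eq_one _ hv, mul_one]

lemma pdf_mul_exp_integrable {v : ℝ≥0} (hv : v ≠ 0) (s : ℝ) :
    Integrable (fun x => gaussianPDFReal 0 v x * Real.exp (s * x)) := by
  have : (fun x => gaussianPDFReal 0 v x * Real.exp (s * x))
      = fun x => Real.exp (s ^ 2 * v / 2) * gaussianPDFReal (s * v) v x :=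
    funext fun x => pdf_mul_exp_eq hv s x
  rw [this]
  exact (integrable_gaussianPDFReal _ _).const_mul _

set_option maxHeartbeats 1000000 in
theorem stmt4 (p t K : ℝ) (hp : 2 ≤ p) (ht0 : 0 ≤ t) (ht1 : t < 1) (hK : 0 < K)
    (hbig : Real.exp 1 ≤ 4 / K ^ 2 / (1 - t)) (hsmall : (K / 2) ^ p ≤ 1 / 4) :
    let r := 2 * Real.sqrt (p * (1 - t) * Real.log (4 / K ^ 2 / (1 - t)))
    let h : ℝ → ℝ := fun x =>
      if |x| ≤ r / 2 then 1 else if |x| ≤ r then (r / 2)⁻¹ * (r - |x|) else 0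
    let h' : ℝ → ℝ := fun x =>
      if r / 2 < |x| ∧ |x| < r then -(Real.sign x) * (r / 2)⁻¹ else 0
    (∫ x, |h' x| ^ p ∂(gaussianReal 0 (Real.toNNReal (1 - t)))) ^ (1 / p)
      ≤ K * (∫ x, |h x| ^ p ∂(gaussianReal 0 (Real.toNNReal (1 - t)))) ^ (1 / p) := by
  intro r h h'
  have hv0 : (0:ℝ) < 1 - t := by linarith
  have hv1 : (1:ℝ) - t ≤ 1 := by linarith
  set vn : ℝ≥0 := Real.toNNReal (1 - t) with hvn
  have hvnne : vn ≠ 0 := by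
    simp only [hvn, ne_eq, Real.toNNReal_eq_zero, not_le]
    exact hv0
  have hvnR : ((vn : ℝ)) = 1 - t := Real.coe_toNNReal _ hv0.le
  have hp0 : (0:ℝ) < p := by linarith
  have hpne : p ≠ 0 := hp0.ne'
  set A : ℝ := 4 / K ^ 2 / (1 - t) with hAdef
  have hApos : 0 < A := lt_of_lt_of_le (Real.exp_pos 1) hbig
  have hlogA : 1 ≤ Real.log A := (Real.le_log_iff_exp_le hApos).mpr hbig
  set a : ℝ := Real.sqrt (p * (1 - t) * Real.log A) with ha
  have hprod : 0 < p * (1 - t) * Real.log A :=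
    mul_pos (mul_pos hp0 hv0) (by linarith)
  have hapos : 0 < a := Real.sqrt_pos.mpr hprod
  have ha2 : a ^ 2 = p * (1 - t) * Real.log A := Real.sq_sqrt hprod.le
  have hra : r = 2 * a := rfl
  have hrpos : 0 < r := by rw [hra]; linarith
  have hr2 : r / 2 = a := by rw [hra]; ring
  set s : ℝ := a / (1 - t) with hs
  have hs0 : 0 < s := div_pos hapos hv0
  set B : ℝ := K * Real.sqrt (1 - t) / 2 with hB
  have hsqv : Real.sqrt (1 - t) ^ 2 = 1 - t := Real.sq_sqrt hv0.le
  have hsqvpos : 0 < Real.sqrt (1 - t) := Real.sqrt_pos.mpr hv0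
  have hBpos : 0 < B := by rw [hB]; positivity
  have hAB : A = (B ^ 2)⁻¹ := by
    rw [hAdef, hB]
    rw [div_pow, mul_pow, hsqv]
    rw [div_div]
    rw [inv_div]
    congr 1
    ring
  have hlogB : Real.log A = -(2 * Real.log B) := by
    rw [hAB, Real.log_inv, Real.log_pow]
    push_cast; ring
  set E : ℝ := Real.exp (s ^ 2 * (1 - t) / 2 - s * a) with hE
  have hEpos : 0 < E := Real.exp_pos _
  have hEB : E = B ^ p := by
    rw [Real.rpow_def_of_pos hBpos, hE]
    congr 1
    have h1 : s ^ 2 * (1 - t) / 2 - s * a = -(a ^ 2) / (2 * (1 - t)) := by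
      rw [hs]; field_simp; ring
    rw [h1, ha2, hlogB]
    field_simp
  have hB_le : B ≤ K / 2 := by
    rw [hB]
    have h1 : Real.sqrt (1 - t) ≤ 1 := by
      have h2 := Real.sqrt_le_sqrt hv1
      rwa [Real.sqrt_one] at h2
    nlinarith
  have hE14 : E ≤ 1 / 4 := by
    rw [hEB]
    calc B ^ p ≤ (K / 2) ^ p := Real.rpow_le_rpow hBpos.le hB_le hp0.le
      _ ≤ 1 / 4 := hsmall
  -- the dominating function
  set g : ℝ → ℝ := fun x =>
    Real.exp (s * x) * Real.exp (-(s * a)) + Real.exp (-s * x) * Real.exp (-(s * a)) with hg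
  have hgx : ∀ x : ℝ, g x =
      Real.exp (s * x) * Real.exp (-(s * a)) + Real.exp (-s * x) * Real.exp (-(s * a)) :=
    fun x => rfl
  have hg0 : ∀ x, 0 ≤ g x := fun x => by rw [hgx]; positivity
  have hg1 : ∀ x : ℝ, a ≤ |x| → 1 ≤ g x := by
    intro x hx
    rw [hgx]
    rcases le_or_gt 0 x with h0 | h0
    · rw [abs_of_nonneg h0] at hx
      have h1 : (1:ℝ) ≤ Real.exp (s * x) * Real.exp (-(s * a)) := by
        rw [← Real.exp_add]
        apply Real.one_le_exp
        nlinarith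
      have h2 : (0:ℝ) ≤ Real.exp (-s * x) * Real.exp (-(s * a)) := by positivity
      linarith
    · rw [abs_of_neg h0] at hx
      have h1 : (1:ℝ) ≤ Real.exp (-s * x) * Real.exp (-(s * a)) := by
        rw [← Real.exp_add]
        apply Real.one_le_exp
        nlinarith
      have h2 : (0:ℝ) ≤ Real.exp (s * x) * Real.exp (-(s * a)) := by positivity
      linarith
  -- integrability and integral of pdf * g
  have hgsplit : (fun x => gaussianPDFReal 0 vn x * g x)
      = fun x => gaussianPDFReal 0 vn x * Real.exp (s * x) * Real.exp (-(s * a))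
        + gaussianPDFReal 0 vn x * Real.exp (-s * x) * Real.exp (-(s * a)) := by
    funext x; rw [hgx]; ring
  have hint_e1 : Integrable (fun x =>
      gaussianPDFReal 0 vn x * Real.exp (s * x) * Real.exp (-(s * a))) :=
    (pdf_mul_exp_integrable hvnne s).mul_const _
  have hint_e2 : Integrable (fun x =>
      gaussianPDFReal 0 vn x * Real.exp (-s * x) * Real.exp (-(s * a))) :=
    (pdf_mul_exp_integrable hvnne (-s)).mul_const _
  have hint_g : Integrable (fun x => gaussianPDFReal 0 vn x * g x) := by
    rw [hgsplit]; exact hint_e1.add hint_e2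
  have hIg : ∫ x, gaussianPDFReal 0 vn x * g x = 2 * E := by
    rw [hgsplit, integral_add hint_e1 hint_e2, integral_mul_const, integral_mul_const,
      pdf_mul_exp_integral hvnne s, pdf_mul_exp_integral hvnne (-s), hvnR, hE]
    rw [← Real.exp_add, ← Real.exp_add]
    have e1 : s ^ 2 * (1 - t) / 2 + -(s * a) = s ^ 2 * (1 - t) / 2 - s * a := by ring
    have e2 : (-s) ^ 2 * (1 - t) / 2 + -(s * a) = s ^ 2 * (1 - t) / 2 - s * a := by ring
    rw [e1, e2]; ring
  -- measurability
  have hsign : Measurable Real.sign := by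
    have hde : Real.sign = fun r : ℝ => if r < 0 then (-1:ℝ) else if 0 < r then 1 else 0 :=
      funext fun r => rfl
    rw [hde]
    exact Measurable.ite (measurableSet_lt measurable_id measurable_const) measurable_const
      (Measurable.ite (measurableSet_lt measurable_const measurable_id) measurable_const
        measurable_const)
  have hSlt : ∀ c : ℝ, MeasurableSet {x : ℝ | |x| ≤ c} :=
    fun c => (isClosed_le continuous_abs continuous_const).measurableSet
  have hSmid : MeasurableSet {x : ℝ | r / 2 < |x| ∧ |x| < r} :=
    ((isOpen_lt continuous_const continuous_abs).inter
      (isOpen_lt continuous_abs continuous_const)).measurableSet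
  have hmeas_h' : Measurable h' := by
    have hde : h' = fun x => if r / 2 < |x| ∧ |x| < r then -(Real.sign x) * (r / 2)⁻¹ else 0 := rfl
    rw [hde]
    exact Measurable.ite hSmid (hsign.neg.mul_const _) measurable_const
  have hmeas_h : Measurable h := by
    have hde : h = fun x =>
        if |x| ≤ r / 2 then 1 else if |x| ≤ r then (r / 2)⁻¹ * (r - |x|) else 0 := rfl
    rw [hde]
    exact Measurable.ite (hSlt (r / 2)) measurable_const
      (Measurable.ite (hSlt r) ((measurable_const.sub measurable_abs).const_mul _)
        measurable_const)
  have hmeas_rp : ∀ {f : ℝ → ℝ}, Measurable f → Measurable (fun x => |f x| ^ p) :=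
    fun hf => (Real.continuous_rpow_const hp0.le).measurable.comp hf.abs
  -- bound on |h'|
  have hsign_le : ∀ x : ℝ, |Real.sign x| ≤ 1 := by
    intro x
    rcases Real.sign_apply_eq x with h1 | h1 | h1 <;> rw [h1] <;> norm_num
  have hh'le : ∀ x, |h' x| ≤ 2 / r := by
    intro x
    have hde : h' x = if r / 2 < |x| ∧ |x| < r then -(Real.sign x) * (r / 2)⁻¹ else 0 := rfl
    rw [hde]
    split_ifs with hc
    · rw [abs_mul, abs_neg, inv_div, abs_of_nonneg (by positivity : (0:ℝ) ≤ 2 / r)]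
      calc |Real.sign x| * (2 / r) ≤ 1 * (2 / r) :=
          mul_le_mul_of_nonneg_right (hsign_le x) (by positivity)
        _ = 2 / r := one_mul _
    · rw [abs_zero]; positivity
  have hh'rp : ∀ x, |h' x| ^ p ≤ (2 / r) ^ p :=
    fun x => Real.rpow_le_rpow (abs_nonneg _) (hh'le x) hp0.le
  -- pointwise bound 1
  have hpt1 : ∀ x, gaussianPDFReal 0 vn x * |h' x| ^ p
      ≤ gaussianPDFReal 0 vn x * ((2 / r) ^ p * g x) := by
    intro x
    apply mul_le_mul_of_nonneg_left _ (gaussianPDFReal_nonneg 0 vn x)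
    have hde : h' x = if r / 2 < |x| ∧ |x| < r then -(Real.sign x) * (r / 2)⁻¹ else 0 := rfl
    by_cases hc : r / 2 < |x| ∧ |x| < r
    · have h1 : 1 ≤ g x := hg1 x (by rw [← hr2]; exact hc.1.le)
      calc |h' x| ^ p ≤ (2 / r) ^ p := hh'rp x
        _ = (2 / r) ^ p * 1 := (mul_one _).symm
        _ ≤ (2 / r) ^ p * g x :=
          mul_le_mul_of_nonneg_left h1 (Real.rpow_nonneg (by positivity) p)
    · rw [hde, if_neg hc, abs_zero, Real.zero_rpow hpne]
      have := hg0 x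
      positivity
  -- integrability of pdf * |h'|^p
  have hint1 : Integrable (fun x => gaussianPDFReal 0 vn x * |h' x| ^ p) := by
    apply Integrable.mono' ((integrable_gaussianPDFReal 0 vn).const_mul ((2 / r) ^ p))
      ((measurable_gaussianPDFReal 0 vn).mul (hmeas_rp hmeas_h')).aestronglyMeasurable
    filter_upwards with x
    have h0 : 0 ≤ gaussianPDFReal 0 vn x := gaussianPDFReal_nonneg 0 vn x
    rw [Real.norm_eq_abs, Pi.mul_apply, abs_of_nonneg (mul_nonneg h0 (Real.rpow_nonneg (abs_nonneg _) p))]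
    calc gaussianPDFReal 0 vn x * |h' x| ^ p ≤ gaussianPDFReal 0 vn x * (2 / r) ^ p :=
        mul_le_mul_of_nonneg_left (hh'rp x) h0
      _ = (2 / r) ^ p * gaussianPDFReal 0 vn x := mul_comm _ _
  -- integral bound 1
  have hI1 : (∫ x, |h' x| ^ p ∂(gaussianReal 0 vn)) ≤ (2 / r) ^ p * (2 * E) := by
    rw [gauss_int hvnne]
    have hintr : Integrable (fun x => gaussianPDFReal 0 vn x * ((2 / r) ^ p * g x)) := by
      have he : (fun x => gaussianPDFReal 0 vn x * ((2 / r) ^ p * g x))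
          = fun x => (2 / r) ^ p * (gaussianPDFReal 0 vn x * g x) := by funext x; ring
      rw [he]; exact hint_g.const_mul _
    calc (∫ x, gaussianPDFReal 0 vn x * |h' x| ^ p)
        ≤ ∫ x, gaussianPDFReal 0 vn x * ((2 / r) ^ p * g x) :=
          integral_mono hint1 hintr hpt1
      _ = (2 / r) ^ p * ∫ x, gaussianPDFReal 0 vn x * g x := by
          rw [← integral_const_mul]; congr 1; funext x; ring
      _ = (2 / r) ^ p * (2 * E) := by rw [hIg]
  -- bound on |h|
  have hhle : ∀ x, |h x| ≤ 1 := by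
    intro x
    have hde : h x = if |x| ≤ r / 2 then 1
        else if |x| ≤ r then (r / 2)⁻¹ * (r - |x|) else 0 := rfl
    rw [hde]
    split_ifs with hc1 hc2
    · norm_num
    · push_neg at hc1
      have h1 : (0:ℝ) ≤ (r / 2)⁻¹ * (r - |x|) :=
        mul_nonneg (by positivity) (by linarith)
      have h2 : (r / 2)⁻¹ * (r - |x|) ≤ (r / 2)⁻¹ * (r / 2) :=
        mul_le_mul_of_nonneg_left (by linarith) (by positivity)
      have h3 : ((r / 2 : ℝ))⁻¹ * (r / 2) = 1 := inv_mul_cancel₀ (by positivity)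
      rw [abs_of_nonneg h1]
      linarith
    · norm_num
  -- pointwise bound 2
  have hpt2 : ∀ x, gaussianPDFReal 0 vn x * (1 - g x)
      ≤ gaussianPDFReal 0 vn x * |h x| ^ p := by
    intro x
    apply mul_le_mul_of_nonneg_left _ (gaussianPDFReal_nonneg 0 vn x)
    have hde : h x = if |x| ≤ r / 2 then 1
        else if |x| ≤ r then (r / 2)⁻¹ * (r - |x|) else 0 := rfl
    by_cases hc1 : |x| ≤ r / 2
    · rw [hde, if_pos hc1, abs_one, Real.one_rpow]
      linarith [hg0 x]
    · push_neg at hc1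
      have h1 : 1 ≤ g x := hg1 x (by rw [← hr2]; exact hc1.le)
      have h2 : (0:ℝ) ≤ |h x| ^ p := Real.rpow_nonneg (abs_nonneg _) p
      linarith
  -- integrability of pdf * |h|^p
  have hint2 : Integrable (fun x => gaussianPDFReal 0 vn x * |h x| ^ p) := by
    apply Integrable.mono' (integrable_gaussianPDFReal 0 vn)
      ((measurable_gaussianPDFReal 0 vn).mul (hmeas_rp hmeas_h)).aestronglyMeasurable
    filter_upwards with x
    have h0 : 0 ≤ gaussianPDFReal 0 vn x := gaussianPDFReal_nonneg 0 vn x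
    rw [Real.norm_eq_abs, Pi.mul_apply, abs_of_nonneg (mul_nonneg h0 (Real.rpow_nonneg (abs_nonneg _) p))]
    have hrp1 : |h x| ^ p ≤ 1 := by
      calc |h x| ^ p ≤ (1:ℝ) ^ p := Real.rpow_le_rpow (abs_nonneg _) (hhle x) hp0.le
        _ = 1 := Real.one_rpow p
    calc gaussianPDFReal 0 vn x * |h x| ^ p ≤ gaussianPDFReal 0 vn x * 1 :=
        mul_le_mul_of_nonneg_left hrp1 h0
      _ = gaussianPDFReal 0 vn x := mul_one _
  -- integral bound 2
  have hI2 : 1 - 2 * E ≤ ∫ x, |h x| ^ p ∂(gaussianReal 0 vn) := by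
    rw [gauss_int hvnne]
    have hesub : (fun x => gaussianPDFReal 0 vn x * (1 - g x))
        = fun x => gaussianPDFReal 0 vn x - gaussianPDFReal 0 vn x * g x := by
      funext x; ring
    have hintl : Integrable (fun x => gaussianPDFReal 0 vn x * (1 - g x)) := by
      rw [hesub]; exact (integrable_gaussianPDFReal 0 vn).sub hint_g
    calc 1 - 2 * E = ∫ x, gaussianPDFReal 0 vn x * (1 - g x) := by
          rw [hesub, integral_sub (integrable_gaussianPDFReal 0 vn) hint_g,
            integral_gaussianPDFReal_eq_one 0 hvnne, hIg]
      _ ≤ ∫ x, gaussianPDFReal 0 vn x * |h x| ^ p := integral_mono hintl hint2 hpt2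
  -- numeric core
  have h8 : (8:ℝ) ≤ (2 * Real.sqrt 2) ^ p := by
    have hs2 : Real.sqrt 2 ^ 2 = 2 := Real.sq_sqrt (by norm_num)
    have hs2pos : 0 < Real.sqrt 2 := Real.sqrt_pos.mpr (by norm_num)
    have h1 : (1:ℝ) ≤ 2 * Real.sqrt 2 := by nlinarith
    calc (8:ℝ) = (2 * Real.sqrt 2) ^ (2:ℝ) := by
          rw [Real.rpow_two]; nlinarith
      _ ≤ (2 * Real.sqrt 2) ^ p := Real.rpow_le_rpow_of_exponent_le h1 hp
  have hstep : 2 / r * B ≤ K / (2 * Real.sqrt 2) := by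
    have hs2 : Real.sqrt 2 ^ 2 = 2 := Real.sq_sqrt (by norm_num)
    have hs2pos : 0 < Real.sqrt 2 := Real.sqrt_pos.mpr (by norm_num)
    have hrs : 2 * Real.sqrt 2 * Real.sqrt (1 - t) ≤ r := by
      rw [hra, ha, mul_assoc]
      have e1 : Real.sqrt 2 * Real.sqrt (1 - t) = Real.sqrt (2 * (1 - t)) :=
        (Real.sqrt_mul (by norm_num) _).symm
      rw [e1]
      have h2a : 2 * (1 - t) ≤ p * (1 - t) := mul_le_mul_of_nonneg_right hp hv0.le
      have h2b : p * (1 - t) ≤ p * (1 - t) * Real.log A :=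
        le_mul_of_one_le_right (by positivity) hlogA
      have h2 : 2 * (1 - t) ≤ p * (1 - t) * Real.log A := h2a.trans h2b
      have := Real.sqrt_le_sqrt h2
      linarith
    have he : 2 / r * B = K * Real.sqrt (1 - t) / r := by
      rw [hB]; field_simp
    rw [he, div_le_div_iff₀ hrpos (by positivity)]
    nlinarith [mul_le_mul_of_nonneg_left hrs hK.le]
  have hcore : (2 / r) ^ p * (2 * E) ≤ K ^ p * (1 / 2) := by
    have e1 : (2 / r) ^ p * B ^ p = (2 / r * B) ^ p :=
      (Real.mul_rpow (by positivity) hBpos.le).symm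
    have hmono : (2 / r * B) ^ p ≤ (K / (2 * Real.sqrt 2)) ^ p :=
      Real.rpow_le_rpow (by positivity) hstep hp0.le
    have e2 : (K / (2 * Real.sqrt 2)) ^ p = K ^ p / (2 * Real.sqrt 2) ^ p :=
      Real.div_rpow hK.le (by positivity) p
    have hKp : (0:ℝ) < K ^ p := Real.rpow_pos_of_pos hK p
    have h3 : K ^ p / (2 * Real.sqrt 2) ^ p ≤ K ^ p / 8 :=
      div_le_div_of_nonneg_left hKp.le (by norm_num) h8
    -- unused marker
    have e3 : (2 / r) ^ p * (2 * E) = 2 * ((2 / r) ^ p * B ^ p) := by rw [hEB]; ring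
    rw [e3, e1]
    have h4 : (2 / r * B) ^ p ≤ K ^ p / 8 := by
      calc (2 / r * B) ^ p ≤ (K / (2 * Real.sqrt 2)) ^ p := hmono
        _ = K ^ p / (2 * Real.sqrt 2) ^ p := e2
        _ ≤ K ^ p / 8 := h3
    linarith
  -- assembly
  have hI1nn : 0 ≤ ∫ x, |h' x| ^ p ∂(gaussianReal 0 vn) :=
    integral_nonneg fun x => Real.rpow_nonneg (abs_nonneg _) p
  have h2E : 2 * E ≤ 1 / 2 := by linarith
  have hI2half : 1 / 2 ≤ ∫ x, |h x| ^ p ∂(gaussianReal 0 vn) := by linarith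
  have hpinv : 0 ≤ 1 / p := by positivity
  calc (∫ x, |h' x| ^ p ∂(gaussianReal 0 vn)) ^ (1 / p)
      ≤ ((2 / r) ^ p * (2 * E)) ^ (1 / p) := Real.rpow_le_rpow hI1nn hI1 hpinv
    _ ≤ (K ^ p * (1 / 2)) ^ (1 / p) := by
        apply Real.rpow_le_rpow _ hcore hpinv
        positivity
    _ = K * (1 / 2) ^ (1 / p) := by
        rw [Real.mul_rpow (Real.rpow_nonneg hK.le p) (by norm_num),
          ← Real.rpow_mul hK.le, mul_one_div, div_self hpne, Real.rpow_one]
    _ ≤ K * (∫ x, |h x| ^ p ∂(gaussianReal 0 vn)) ^ (1 / p) := by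
        apply mul_le_mul_of_nonneg_left _ hK.le
        exact Real.rpow_le_rpow (by norm_num) hI2half hpinv
end
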